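/- Regard S as a function of the separation constant ψ₀ as well, S(R,ψ,ψ₀) = R sin(ψ − ψ₀) − ∫₀^ψ l(t) cos(t − ψ₀) dt. Then for every (R,ψ,ψ₀) the partial derivative of S with respect to ψ₀ exists and equals −(sin ψ₀ · F₁(R,ψ) + cos ψ₀ · F₂(R,ψ)), where F₁, F₂ are the two components of F; thus differentiating the solution with respect to the constant ψ₀ again yields a linear combination of the Cartesian coordinate functions, so by the Jacobi theorem the lines S = const are straight lines. -/

import Mathlib

open Real

/-- Equation (9) of the paper: Cartesian coordinates as functions of the
coordinates `(R, ψ)` built from the tangent rays of a basic curve. -/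
noncomputable def F (l : ℝ → ℝ) (p : ℝ × ℝ) : ℝ × ℝ :=
  (p.1 * Real.sin p.2 - ∫ t in (0:ℝ)..p.2, l t * Real.cos t,
   p.1 * Real.cos p.2 + ∫ t in (0:ℝ)..p.2, l t * Real.sin t)

/-- The separated solution of the Hamilton–Jacobi equation for straight lines,
regarded also as a function of the separation constant `ψ₀`. -/
noncomputable def S (l : ℝ → ℝ) (R ψ ψ₀ : ℝ) : ℝ :=
  R * Real.sin (ψ - ψ₀) - ∫ t in (0:ℝ)..ψ, l t * Real.cos (t - ψ₀)

/-- Differentiating the solution with respect to the constant `ψ₀` again yields a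
linear combination of the Cartesian coordinate functions (Jacobi's theorem). -/
theorem stmt_11 (l : ℝ → ℝ) (hl : Continuous l) (R ψ ψ₀ : ℝ) :
    HasDerivAt (fun c => S l R ψ c)
      (-(Real.sin ψ₀ * (F l (R, ψ)).1 + Real.cos ψ₀ * (F l (R, ψ)).2)) ψ₀ := by
  set A : ℝ := ∫ t in (0:ℝ)..ψ, l t * Real.cos t with hA
  set B : ℝ := ∫ t in (0:ℝ)..ψ, l t * Real.sin t with hB
  have hiA : IntervalIntegrable (fun t => l t * Real.cos t) MeasureTheory.volume 0 ψ :=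
    (hl.mul Real.continuous_cos).intervalIntegrable 0 ψ
  have hiB : IntervalIntegrable (fun t => l t * Real.sin t) MeasureTheory.volume 0 ψ :=
    (hl.mul Real.continuous_sin).intervalIntegrable 0 ψ
  have hS : ∀ c : ℝ, S l R ψ c = R * Real.sin (ψ - c) - (Real.cos c * A + Real.sin c * B) := by
    intro c
    have : (∫ t in (0:ℝ)..ψ, l t * Real.cos (t - c))
        = Real.cos c * A + Real.sin c * B := by
      have h1 : ∀ t : ℝ, l t * Real.cos (t - c)
          = Real.cos c * (l t * Real.cos t) + Real.sin c * (l t * Real.sin t) := by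
        intro t; rw [Real.cos_sub]; ring
      rw [intervalIntegral.integral_congr (fun t _ => h1 t)]
      rw [intervalIntegral.integral_add (hiA.const_mul _) (hiB.const_mul _),
        intervalIntegral.integral_const_mul, intervalIntegral.integral_const_mul]
    simp [S, this]
  have h1 : HasDerivAt (fun c : ℝ => R * Real.sin (ψ - c) - (Real.cos c * A + Real.sin c * B))
      (-(Real.sin ψ₀ * (F l (R, ψ)).1 + Real.cos ψ₀ * (F l (R, ψ)).2)) ψ₀ := by
    have hsin : HasDerivAt (fun c : ℝ => Real.sin (ψ - c)) (-Real.cos (ψ - ψ₀)) ψ₀ := by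
      have := (Real.hasDerivAt_sin (ψ - ψ₀)).comp ψ₀
        ((hasDerivAt_id ψ₀).const_sub ψ)
      simpa [Function.comp_def] using this
    have h := ((hsin.const_mul R).sub
      (((Real.hasDerivAt_cos ψ₀).mul_const A).add ((Real.hasDerivAt_sin ψ₀).mul_const B)))
    refine h.congr_deriv ?_
    simp only [F, hA, hB, Real.cos_sub]
    ring
  have heq : (fun c => S l R ψ c) = fun c : ℝ => R * Real.sin (ψ - c) - (Real.cos c * A + Real.sin c * B) := funext hS
  rw [heq]
  exact h1
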